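/- arXiv:1107.5647 — 5 statements merged into one kernel-verified Lean document; each statement's English description precedes it below -/
import Mathlib

section
/- Let f : [a, ∞) → ℝ be continuous and nonnegative, and let α > 0. Then the condition that (1/(α+1))·f(t) ≥ (1/(t-a))·∫_a^t f(x) dx holds for all t sufficiently large is equivalent to the condition that the ratio ((1/(t-a))·∫_a^t f(x) dx) / (t-a)^α is nondecreasing for t larger than some A ≥ a. -/
open Set Filter MeasureTheory intervalIntegral

theorem gc_alpha_iff_ratio_monotone (a α : ℝ) (hα : 0 < α) (f : ℝ → ℝ)
    (hf : ContinuousOn f (Set.Ici a)) (hf0 : ∀ x ∈ Set.Ici a, 0 ≤ f x) :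
    (∀ᶠ t in Filter.atTop, (1 / (α + 1)) * f t ≥ (1 / (t - a)) * ∫ x in a..t, f x) ↔
    (∃ A ≥ a, MonotoneOn
      (fun t => ((1 / (t - a)) * ∫ x in a..t, f x) / (t - a) ^ α) (Set.Ioi A)) := by
  have hα1 : (0:ℝ) < α + 1 := by linarith
  set F : ℝ → ℝ := fun t => ∫ x in a..t, f x with hFdef
  set g : ℝ → ℝ := fun t => ((1 / (t - a)) * F t) / (t - a) ^ α with hgdef
  -- derivative of F
  have hFd : ∀ t, a < t → HasDerivAt F (f t) t := by
    intro t ht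
    have hIci : Set.Ici a ∈ nhds t := Ici_mem_nhds ht
    have hct : ContinuousAt f t := hf.continuousAt hIci
    have hint : IntervalIntegrable f volume a t := by
      apply ContinuousOn.intervalIntegrable
      apply hf.mono
      rw [Set.uIcc_of_le ht.le]
      exact Set.Icc_subset_Ici_self
    exact intervalIntegral.integral_hasDerivAt_right hint
      (ContinuousOn.stronglyMeasurableAtFilter isOpen_Ioi
        (hf.mono Set.Ioi_subset_Ici_self) t ht) hct
  -- key derivative computation
  have key : ∀ t, a < t → HasDerivAt g
      ((f t * (t - a) - (α + 1) * F t) * (t - a) ^ (-(α + 2))) t := by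
    intro t ht
    have hta : 0 < t - a := sub_pos.2 ht
    -- derivative of (· - a) ^ (-(α+1))
    have hid : HasDerivAt (fun s : ℝ => s - a) 1 t := (hasDerivAt_id t).sub_const a
    have hr : HasDerivAt (fun s : ℝ => (s - a) ^ (-(α + 1)))
        (-(α + 1) * (t - a) ^ (-(α + 1) - 1)) t := by
      have := (Real.hasDerivAt_rpow_const (x := t - a) (p := -(α + 1))
        (Or.inl hta.ne')).comp t hid
      simpa [Function.comp_def] using this
    have hh : HasDerivAt (fun s => F s * (s - a) ^ (-(α + 1)))
        (f t * (t - a) ^ (-(α + 1)) + F t * (-(α + 1) * (t - a) ^ (-(α + 1) - 1))) t :=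
      (hFd t ht).mul hr
    have heq : g =ᶠ[nhds t] fun s => F s * (s - a) ^ (-(α + 1)) := by
      filter_upwards [Ioi_mem_nhds ht] with s hs
      have hsa : (0:ℝ) < s - a := sub_pos.2 hs
      rw [hgdef]
      simp only
      rw [Real.rpow_neg hsa.le, Real.rpow_add hsa, Real.rpow_one]
      have h1 : (s - a) ^ α ≠ 0 := (Real.rpow_pos_of_pos hsa α).ne'
      field_simp
    have hg' : HasDerivAt g
        (f t * (t - a) ^ (-(α + 1)) + F t * (-(α + 1) * (t - a) ^ (-(α + 1) - 1))) t :=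
      hh.congr_of_eventuallyEq heq
    convert hg' using 1
    have e1 : (t - a) ^ (-(α + 1)) = (t - a) * (t - a) ^ (-(α + 2)) := by
      rw [show -(α + 1) = 1 + -(α + 2) by ring, Real.rpow_add hta, Real.rpow_one]
    have e2 : -(α + 1) - 1 = -(α + 2) := by ring
    rw [e1, e2]
    ring
  constructor
  · rintro h
    obtain ⟨T, hT⟩ := eventually_atTop.1 h
    refine ⟨max a T, le_max_left _ _, ?_⟩
    have hdiff : ∀ t ∈ Set.Ioi (max a T), a < t := fun t ht =>
      lt_of_le_of_lt (le_max_left a T) ht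
    apply monotoneOn_of_deriv_nonneg (convex_Ioi _)
    · intro t ht
      exact ((key t (hdiff t ht)).differentiableAt.continuousAt).continuousWithinAt
    · rw [interior_Ioi]
      intro t ht
      exact ((key t (hdiff t ht)).differentiableAt).differentiableWithinAt
    · rw [interior_Ioi]
      intro t ht
      have hta : 0 < t - a := sub_pos.2 (hdiff t ht)
      have hTt : T ≤ t := le_of_lt (lt_of_le_of_lt (le_max_right a T) ht)
      have h' := hT t hTt
      rw [ge_iff_le, one_div, one_div, inv_mul_eq_div, inv_mul_eq_div,
        div_le_div_iff₀ hta hα1] at h'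
      rw [(key t (hdiff t ht)).deriv]
      exact mul_nonneg (by linarith) (Real.rpow_nonneg hta.le _)
  · rintro ⟨A, hAa, hmono⟩
    filter_upwards [eventually_gt_atTop A] with t ht
    have hta' : a < t := lt_of_le_of_lt hAa ht
    have hta : 0 < t - a := sub_pos.2 hta'
    have hDnn : 0 ≤ (f t * (t - a) - (α + 1) * F t) * (t - a) ^ (-(α + 2)) := by
      have hd := (key t hta').hasDerivWithinAt (s := Set.Ioi t)
      rw [hasDerivWithinAt_iff_tendsto_slope,
        Set.diff_singleton_eq_self (by simp : t ∉ Set.Ioi t)] at hd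
      refine ge_of_tendsto hd ?_
      filter_upwards [self_mem_nhdsWithin] with s hs
      have hts : t < s := hs
      rw [slope_def_field]
      apply div_nonneg _ (by linarith)
      rw [sub_nonneg]
      exact hmono ht (lt_trans ht hts) hts.le
    have hpos : (0:ℝ) < (t - a) ^ (-(α + 2)) := Real.rpow_pos_of_pos hta _
    have hnum : 0 ≤ f t * (t - a) - (α + 1) * F t := by
      have h2 := div_nonneg hDnn hpos.le
      rwa [mul_div_assoc, div_self hpos.ne', mul_one] at h2
    rw [ge_iff_le, one_div, one_div, inv_mul_eq_div, inv_mul_eq_div,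
      div_le_div_iff₀ hta hα1]
    linarith
end

section
/- Let g ∈ C¹([a, ∞)) be nondecreasing and nonnegative, and let α > 0. Then the function f(x) = g(x)·(x-a)^α satisfies (1/(t-a))·∫_a^t f(x) dx ≤ (1/(α+1))·f(t) for all t > a; in particular f belongs to the class GC_α. -/
open Set Filter MeasureTheory intervalIntegral

theorem monotone_times_power_mem_GC (a α : ℝ) (hα : 0 < α) (g : ℝ → ℝ)
    (hg : ContDiffOn ℝ 1 g (Set.Ici a)) (hgmono : MonotoneOn g (Set.Ici a))
    (hgnn : ∀ x ∈ Set.Ici a, 0 ≤ g x) :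
    ∀ t > a, (1 / (t - a)) * (∫ x in a..t, g x * (x - a) ^ α)
      ≤ (1 / (α + 1)) * (g t * (t - a) ^ α) := by
  intro t ht
  have hta : (0:ℝ) < t - a := by linarith
  have hcontp : Continuous fun x : ℝ => (x - a) ^ α := by
    have : Continuous fun x : ℝ => x - a := by continuity
    exact (Real.continuous_rpow_const hα.le).comp this
  have hgc : ContinuousOn g (Set.Icc a t) :=
    (hg.continuousOn).mono (Icc_subset_Ici_self)
  have hint1 : IntervalIntegrable (fun x => g x * (x - a) ^ α) volume a t := by
    apply ContinuousOn.intervalIntegrable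
    rw [Set.uIcc_of_le ht.le]
    exact hgc.mul hcontp.continuousOn
  have hint2 : IntervalIntegrable (fun x => g t * (x - a) ^ α) volume a t :=
    (continuous_const.mul hcontp).intervalIntegrable a t
  have hmono : ∫ x in a..t, g x * (x - a) ^ α ≤ ∫ x in a..t, g t * (x - a) ^ α := by
    apply intervalIntegral.integral_mono_on ht.le hint1 hint2
    intro x hx
    have hx1 : a ≤ x := hx.1
    have hxp : 0 ≤ (x - a) ^ α := Real.rpow_nonneg (by linarith) α
    exact mul_le_mul_of_nonneg_right (hgmono hx1 ht.le hx.2) hxp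
  have hval : ∫ x in a..t, (x - a) ^ α = (t - a) ^ (α + 1) / (α + 1) := by
    have := intervalIntegral.integral_comp_sub_right (fun u => u ^ α) a (a := a) (b := t)
    rw [this, sub_self]
    rw [integral_rpow (Or.inl (by linarith))]
    rw [Real.zero_rpow (by positivity)]
    ring
  have hval2 : ∫ x in a..t, g t * (x - a) ^ α = g t * ((t - a) ^ (α + 1) / (α + 1)) := by
    rw [intervalIntegral.integral_const_mul, hval]
  have hrpow : (t - a) ^ (α + 1) = (t - a) ^ α * (t - a) := by
    rw [Real.rpow_add_one (ne_of_gt hta)]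
  have hgt : 0 ≤ g t := hgnn t (le_of_lt ht)
  calc (1 / (t - a)) * (∫ x in a..t, g x * (x - a) ^ α)
      ≤ (1 / (t - a)) * (g t * ((t - a) ^ (α + 1) / (α + 1))) := by
        rw [← hval2]
        exact mul_le_mul_of_nonneg_left hmono (by positivity)
    _ = (1 / (α + 1)) * (g t * (t - a) ^ α) := by
        rw [hrpow]; field_simp
end

section
/- The function f(x) = (x + sin x)·x on [0, ∞) belongs to the class GC₁ but is not convex on [0, ∞). -/
open Set Filter MeasureTheory intervalIntegral

lemma integral_aux (t : ℝ) :
    ∫ x in (0:ℝ)..t, (x + Real.sin x) * x = t^3/3 + Real.sin t - t * Real.cos t := by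
  have h : ∀ x : ℝ, HasDerivAt (fun y => y^3/3 + Real.sin y - y * Real.cos y)
      ((x + Real.sin x) * x) x := by
    intro x
    have h1 : HasDerivAt (fun y : ℝ => y^3/3) (x^2) x := by
      have := (hasDerivAt_pow 3 x).div_const 3
      simpa using this.congr_deriv (by ring)
    have h2 := Real.hasDerivAt_sin x
    have h3 : HasDerivAt (fun y : ℝ => y * Real.cos y) (Real.cos x - x * Real.sin x) x := by
      have := (hasDerivAt_id x).mul (Real.hasDerivAt_cos x)
      simp only [id] at this
      exact this.congr_deriv (by ring)
    have := (h1.add h2).sub h3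
    exact this.congr_deriv (by ring)
  rw [intervalIntegral.integral_eq_sub_of_hasDerivAt (fun x _ => h x)]
  · simp
  · apply Continuous.intervalIntegrable
    continuity

theorem x_plus_sin_x_times_x_GC_one_not_convex :
    (∀ᶠ t in Filter.atTop,
      (1 / 2) * ((t + Real.sin t) * t) ≥ (1 / t) * ∫ x in (0:ℝ)..t, (x + Real.sin x) * x) ∧
    ¬ ConvexOn ℝ (Set.Ici (0:ℝ)) (fun x => (x + Real.sin x) * x) := by
  constructor
  · filter_upwards [eventually_ge_atTop (5:ℝ)] with t ht
    have ht0 : (0:ℝ) < t := by linarith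
    rw [integral_aux, ge_iff_le, one_div, inv_mul_le_iff₀ ht0]
    have hs1 := Real.neg_one_le_sin t
    have hs2 := Real.sin_le_one t
    have hc1 := Real.neg_one_le_cos t
    have hc2 := Real.cos_le_one t
    nlinarith [sq_nonneg t, mul_pos ht0 ht0]
  · intro hconv
    set m : ℝ := 5 * Real.pi / 2 with hm
    have hpi := Real.pi_gt_three
    have ha : m - 1 ∈ Set.Ici (0:ℝ) := by
      simp only [Set.mem_Ici, hm]; linarith
    have hc : m + 1 ∈ Set.Ici (0:ℝ) := by
      simp only [Set.mem_Ici, hm]; linarith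
    have key := hconv.2 ha hc (by norm_num : (0:ℝ) ≤ 1/2) (by norm_num : (0:ℝ) ≤ 1/2)
      (by norm_num)
    have hmid : (1/2 : ℝ) • (m - 1) + (1/2 : ℝ) • (m + 1) = m := by simp only [smul_eq_mul]; ring
    rw [hmid] at key
    simp only [smul_eq_mul] at key
    -- compute trig values
    have hsm : Real.sin m = 1 := by
      have : m = Real.pi / 2 + 2 * Real.pi := by rw [hm]; ring
      rw [this, Real.sin_add_two_pi, Real.sin_pi_div_two]
    have hsa : Real.sin (m - 1) = Real.cos 1 := by
      have : m - 1 = Real.pi / 2 + -1 + 2 * Real.pi := by rw [hm]; ring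
      rw [this, Real.sin_add_two_pi, Real.sin_add, Real.sin_pi_div_two,
        Real.cos_pi_div_two, Real.cos_neg]
      ring
    have hsc : Real.sin (m + 1) = Real.cos 1 := by
      have : m + 1 = Real.pi / 2 + 1 + 2 * Real.pi := by rw [hm]; ring
      rw [this, Real.sin_add_two_pi, Real.sin_add, Real.sin_pi_div_two,
        Real.cos_pi_div_two]
      ring
    rw [hsm, hsa, hsc] at key
    have hcos : Real.cos 1 ≤ 2/3 := Real.cos_one_le.trans (by norm_num)
    have hmge : m ≥ 15/2 := by rw [hm]; linarith
    nlinarith [key]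
end

section
/- Let f ∈ C([0, ∞)) be nonnegative and nondecreasing with f(0) = 0 and f(t) > 0 for t > 0 and satisfying the generalized Keller-Osserman condition of order p > 1, i.e., ∫_1^∞ (F(t))^{-1/p} dt < ∞ where F(x) = ∫_0^x f(s) ds and F is nondecreasing. Then lim_{t→∞} F(t)/t^p = ∞. -/
open Set Filter MeasureTheory intervalIntegral

theorem keller_osserman_growth (p : ℝ) (hp : 1 < p) (f : ℝ → ℝ)
    (hf : ContinuousOn f (Set.Ici 0)) (hfnn : ∀ x ∈ Set.Ici (0:ℝ), 0 ≤ f x)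
    (hfmono : MonotoneOn f (Set.Ici 0)) (hf0 : f 0 = 0)
    (hfpos : ∀ t > (0:ℝ), 0 < f t)
    (hKO : MeasureTheory.IntegrableOn
      (fun t => (∫ s in (0:ℝ)..t, f s) ^ (-1 / p)) (Set.Ici 1)) :
    Filter.Tendsto (fun t => (∫ s in (0:ℝ)..t, f s) / t ^ p) Filter.atTop Filter.atTop := by
  set F : ℝ → ℝ := fun t => ∫ s in (0:ℝ)..t, f s with hFdef
  set g : ℝ → ℝ := fun t => F t ^ (-1 / p) with hgdef
  have hp0 : (0:ℝ) < p := lt_trans one_pos hp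
  -- interval integrability
  have hInt : ∀ a b : ℝ, 0 ≤ a → a ≤ b → IntervalIntegrable f volume a b := by
    intro a b ha hab
    apply ContinuousOn.intervalIntegrable
    apply hf.mono
    rw [Set.uIcc_of_le hab]
    intro x hx; exact le_trans ha hx.1
  -- F monotone
  have hFmono : ∀ a b : ℝ, 0 ≤ a → a ≤ b → F a ≤ F b := by
    intro a b ha hab
    have h1 : F a + ∫ s in a..b, f s = F b :=
      intervalIntegral.integral_add_adjacent_intervals (hInt 0 a le_rfl ha)
        (hInt a b ha hab)
    have h2 : 0 ≤ ∫ s in a..b, f s := by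
      apply intervalIntegral.integral_nonneg hab
      intro u hu; exact hfnn u (le_trans ha hu.1)
    linarith
  -- F 1 > 0
  have hF1 : 0 < F 1 := by
    apply intervalIntegral_pos_of_pos_on (hInt 0 1 le_rfl (by norm_num : (0:ℝ) ≤ 1))
    · intro x hx; exact hfpos x hx.1
    · norm_num
  have hFpos : ∀ x : ℝ, 1 ≤ x → 0 < F x := fun x hx =>
    lt_of_lt_of_le hF1 (hFmono 1 x zero_le_one hx)
  -- negate
  by_contra hcon
  rw [Filter.tendsto_atTop] at hcon
  push_neg at hcon
  obtain ⟨C, hC⟩ := hcon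
  -- C > 0
  have hCpos : 0 < C := by
    obtain ⟨t, htC, ht1⟩ := (hC.and_eventually (eventually_ge_atTop (1:ℝ))).exists
    have ht0 : (0:ℝ) < t := lt_of_lt_of_le one_pos ht1
    have : 0 ≤ F t / t ^ p := div_nonneg (hFpos t ht1).le (Real.rpow_pos_of_pos ht0 p).le
    linarith
  set c : ℝ := C ^ (-1 / p) / 2 with hcdef
  have hcpos : 0 < c := by
    have := Real.rpow_pos_of_pos hCpos (-1 / p)
    positivity
  -- key claim: tail integrals are bounded below by c
  have key : ∀ n : ℕ, 1 ≤ n → c ≤ ∫ x in Set.Ici (n:ℝ), g x := by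
    intro n hn
    have hn1 : (1:ℝ) ≤ (n:ℝ) := by exact_mod_cast hn
    obtain ⟨t, ht2, htC⟩ :=
      (eventually_ge_atTop (max 2 (2 * (n:ℝ)))).and_frequently hC |>.exists
    have ht2' : (2:ℝ) ≤ t := le_trans (le_max_left _ _) ht2
    have htn : 2 * (n:ℝ) ≤ t := le_trans (le_max_right _ _) ht2
    have ht0 : (0:ℝ) < t := lt_of_lt_of_le two_pos ht2'
    have ht1 : (1:ℝ) ≤ t / 2 := by linarith
    have htn2 : (n:ℝ) ≤ t / 2 := by linarith
    have htp : 0 < t ^ p := Real.rpow_pos_of_pos ht0 p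
    have hFt : F t < C * t ^ p := by
      rw [div_lt_iff₀ htp] at htC; exact htC
    have hsub1 : Set.Icc (t/2) t ⊆ Set.Ici (1:ℝ) := fun x hx => le_trans ht1 hx.1
    have hsubn : Set.Icc (t/2) t ⊆ Set.Ici (n:ℝ) := fun x hx => le_trans htn2 hx.1
    have hgi : IntegrableOn g (Set.Icc (t/2) t) volume := hKO.mono_set hsub1
    -- pointwise lower bound on Icc
    have hb : ∀ x ∈ Set.Icc (t/2) t, (C * t ^ p) ^ (-1 / p) ≤ g x := by
      intro x hx
      have hx1 : (1:ℝ) ≤ x := le_trans ht1 hx.1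
      have hFx : 0 < F x := hFpos x hx1
      have hFxle : F x ≤ C * t ^ p :=
        le_of_lt (lt_of_le_of_lt (hFmono x t (by linarith) hx.2) hFt)
      exact Real.rpow_le_rpow_of_nonpos hFx hFxle
        (by rw [neg_div]; exact neg_nonpos.mpr (by positivity))
    -- integral lower bound
    have hmeas : MeasurableSet (Set.Icc (t/2) t) := measurableSet_Icc
    have hconst : ∫ x in Set.Icc (t/2) t, (C * t ^ p) ^ (-1 / p) =
        (t - t/2) * (C * t ^ p) ^ (-1 / p) := by
      rw [MeasureTheory.setIntegral_const, Real.volume_real_Icc_of_le (by linarith), smul_eq_mul]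
    have h1 : (t - t/2) * (C * t ^ p) ^ (-1 / p) ≤ ∫ x in Set.Icc (t/2) t, g x := by
      rw [← hconst]
      apply MeasureTheory.setIntegral_mono_on
        (integrableOn_const (by rw [Real.volume_Icc]; exact ENNReal.ofReal_ne_top))
        hgi hmeas hb
    have h2 : ∫ x in Set.Icc (t/2) t, g x ≤ ∫ x in Set.Ici (n:ℝ), g x := by
      have hint : IntegrableOn g (Set.Ici (n:ℝ)) volume :=
        hKO.mono_set (Set.Ici_subset_Ici.2 hn1)
      apply MeasureTheory.setIntegral_mono_set hint
      · filter_upwards [MeasureTheory.ae_restrict_mem measurableSet_Ici] with x hx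
        exact (Real.rpow_pos_of_pos (hFpos x (le_trans hn1 hx)) _).le
      · exact HasSubset.Subset.eventuallyLE hsubn
    -- compute the constant
    have hcomp : (t - t/2) * (C * t ^ p) ^ (-1 / p) = c := by
      have hCt : (C * t ^ p) ^ (-1 / p) = C ^ (-1 / p) * t⁻¹ := by
        rw [Real.mul_rpow hCpos.le htp.le, ← Real.rpow_mul ht0.le,
          show p * (-1 / p) = -1 by field_simp, Real.rpow_neg_one]
      rw [hCt, hcdef]
      field_simp
      ring
    linarith [le_trans h1 h2]
  -- tail integrals tend to 0
  have L : Tendsto (fun n : ℕ => ∫ x in Set.Ici (n:ℝ), g x) atTop (nhds 0) := by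
    have h := MeasureTheory.tendsto_setIntegral_of_antitone
      (f := g) (μ := volume) (s := fun n : ℕ => Set.Ici (n:ℝ))
      (fun n => measurableSet_Ici)
      (fun m n hmn => Set.Ici_subset_Ici.2 (Nat.cast_le.mpr hmn))
      ⟨1, by simpa using hKO⟩
    have hempty : ⋂ n : ℕ, Set.Ici ((n:ℝ)) = ∅ := by
      apply Set.eq_empty_of_forall_notMem
      intro x hx
      obtain ⟨n, hn⟩ := exists_nat_gt x
      exact absurd (Set.mem_iInter.1 hx n) (not_le.2 hn)
    rwa [hempty, Measure.restrict_empty, MeasureTheory.integral_zero_measure] at h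
  have : ∀ᶠ n : ℕ in atTop, (∫ x in Set.Ici (n:ℝ), g x) < c :=
    (tendsto_order.1 L).2 c hcpos
  obtain ⟨n, hn1, hn2⟩ := ((eventually_ge_atTop 1).and this).exists
  exact absurd (key n hn1) (not_le.2 hn2)
end

section
/- Let C > 0 and let H ∈ C²([0, ∞)) be positive with H' nondecreasing, H'(t) − H'(0) ≥ 0, H'(t) → ∞ as t → ∞, and suppose (1/(2C))·(H'(t) − H'(0))² ≤ H(t)·H''(t) for all t ≥ 0. If moreover there exist β ∈ (0, 1/C) and q > 0 with 2(q+1) < β such that β·H'(t)² ≤ 2·H(t)·H''(t) for all t ≥ T₀ and H(t) → ∞, then the function G(t) = H(t)^{-q} is concave on [T₀, ∞) and tends to 0 at infinity, which is impossible for a strictly positive function; hence no such H exists. -/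
open Set Filter MeasureTheory intervalIntegral

theorem blow_up_concavity_argument (C β q T₀ : ℝ) (hC : 0 < C)
    (hβ : β ∈ Set.Ioo 0 (1 / C)) (hq : 0 < q) (hqβ : 2 * (q + 1) < β)
    (hT₀ : 0 ≤ T₀) (H : ℝ → ℝ) (hH : ContDiff ℝ 2 H)
    (hHpos : ∀ t ≥ (0:ℝ), 0 < H t)
    (hH'mono : MonotoneOn (deriv H) (Set.Ici 0))
    (hH'0 : ∀ t ≥ (0:ℝ), deriv H 0 ≤ deriv H t)
    (hH'inf : Filter.Tendsto (deriv H) Filter.atTop Filter.atTop)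
    (hHinf : Filter.Tendsto H Filter.atTop Filter.atTop)
    (hineq : ∀ t ≥ (0:ℝ),
      (1 / (2 * C)) * (deriv H t - deriv H 0) ^ 2 ≤ H t * deriv (deriv H) t)
    (hβineq : ∀ t ≥ T₀, β * (deriv H t) ^ 2 ≤ 2 * H t * deriv (deriv H) t) :
    ConcaveOn ℝ (Set.Ici T₀) (fun t => (H t) ^ (-q)) ∧
    Filter.Tendsto (fun t => (H t) ^ (-q)) Filter.atTop (nhds 0) ∧
    False := by
  set G : ℝ → ℝ := fun t => (H t) ^ (-q) with hGdef
  have hHd : Differentiable ℝ H := hH.differentiable two_ne_zero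
  have hH1 : ContDiff ℝ 1 (deriv H) := by
    have := (contDiff_succ_iff_deriv (n := 1)).mp hH
    exact this.2.2
  have hH'd : Differentiable ℝ (deriv H) := hH1.differentiable one_ne_zero
  -- derivative of G at positive points
  have hGd : ∀ t : ℝ, 0 < t →
      HasDerivAt G (deriv H t * (-q) * H t ^ (-q - 1)) t := by
    intro t ht
    exact (hHd t).hasDerivAt.rpow_const (Or.inl (ne_of_gt (hHpos t ht.le)))
  have hGderiv : ∀ t : ℝ, 0 < t →
      deriv G t = deriv H t * (-q) * H t ^ (-q - 1) := fun t ht => (hGd t ht).deriv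
  -- second derivative
  have hφd : ∀ t : ℝ, 0 < t →
      HasDerivAt (fun s => deriv H s * (-q) * H s ^ (-q - 1))
        (deriv (deriv H) t * (-q) * H t ^ (-q - 1) +
          deriv H t * (-q) * (deriv H t * (-q - 1) * H t ^ (-q - 1 - 1))) t := by
    intro t ht
    have h1 : HasDerivAt (fun s => deriv H s * (-q)) (deriv (deriv H) t * (-q)) t :=
      (hH'd t).hasDerivAt.mul_const (-q)
    have h2 : HasDerivAt (fun s => H s ^ (-q - 1))
        (deriv H t * (-q - 1) * H t ^ (-q - 1 - 1)) t :=
      (hHd t).hasDerivAt.rpow_const (Or.inl (ne_of_gt (hHpos t ht.le)))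
    have h3 := h1.mul h2
    exact h3
  have hEq : ∀ t : ℝ, 0 < t →
      deriv G =ᶠ[nhds t] fun s => deriv H s * (-q) * H s ^ (-q - 1) := by
    intro t ht
    filter_upwards [eventually_gt_nhds ht] with s hs
    exact hGderiv s hs
  have hG2 : ∀ t : ℝ, 0 < t →
      deriv (deriv G) t = deriv (deriv H) t * (-q) * H t ^ (-q - 1) +
        deriv H t * (-q) * (deriv H t * (-q - 1) * H t ^ (-q - 1 - 1)) := by
    intro t ht
    rw [(hEq t ht).deriv_eq]
    exact (hφd t ht).deriv
  -- concavity
  have hIciT : ∀ t ∈ Set.Ici T₀, (0:ℝ) < H t := fun t ht => hHpos t (hT₀.trans ht)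
  have hG : ConcaveOn ℝ (Set.Ici T₀) G := by
    apply concaveOn_of_deriv2_nonpos (convex_Ici T₀)
    · exact (hHd.continuous.continuousOn).rpow_const fun t ht => Or.inl (ne_of_gt (hIciT t ht))
    · intro t ht
      rw [interior_Ici] at ht
      have ht0 : 0 < t := lt_of_le_of_lt hT₀ ht
      exact ((hGd t ht0).differentiableAt).differentiableWithinAt
    · intro t ht
      rw [interior_Ici] at ht
      have ht0 : 0 < t := lt_of_le_of_lt hT₀ ht
      have : DifferentiableAt ℝ (fun s => deriv H s * (-q) * H s ^ (-q - 1)) t :=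
        (hφd t ht0).differentiableAt
      exact ((hEq t ht0).differentiableAt_iff.mpr this).differentiableWithinAt
    · intro t ht
      rw [interior_Ici] at ht
      have ht0 : 0 < t := lt_of_le_of_lt hT₀ ht
      have hHt : 0 < H t := hHpos t ht0.le
      show deriv^[2] G t ≤ 0
      rw [show deriv^[2] G t = deriv (deriv G) t from rfl, hG2 t ht0]
      have hA : 0 < H t ^ (-q - 1 - 1) := Real.rpow_pos_of_pos hHt _
      have hrw : H t ^ (-q - 1) = H t ^ (-q - 1 - 1) * H t := by
        rw [← Real.rpow_add_one (ne_of_gt hHt)]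
        ring_nf
      rw [hrw]
      have hb := hβineq t ht.le
      have hsq : 0 ≤ (deriv H t) ^ 2 := sq_nonneg _
      have hkey : (q + 1) * (deriv H t) ^ 2 ≤ H t * deriv (deriv H) t := by nlinarith
      have := mul_le_mul_of_nonneg_left hkey (mul_nonneg hq.le hA.le)
      nlinarith [this]
  -- tendsto 0
  have htend : Filter.Tendsto G Filter.atTop (nhds 0) :=
    (tendsto_rpow_neg_atTop hq).comp hHinf
  refine ⟨hG, htend, ?_⟩
  -- derive False
  have hGpos : ∀ t ≥ T₀, 0 < G t := fun t ht => Real.rpow_pos_of_pos (hIciT t ht) _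
  obtain ⟨b, hb1, hb2⟩ : ∃ b, T₀ + 1 ≤ b ∧ H T₀ < H b := by
    have h1 := hHinf.eventually_gt_atTop (H T₀)
    have h2 := eventually_ge_atTop (T₀ + 1)
    obtain ⟨b, hb⟩ := (h2.and h1).exists
    exact ⟨b, hb.1, hb.2⟩
  have hbT : T₀ < b := by linarith
  have hGb : G b < G T₀ :=
    Real.rpow_lt_rpow_of_neg (hHpos T₀ hT₀) hb2 (by linarith)
  set D : ℝ := G T₀ - G b with hDdef
  have hD : 0 < D := by simp [hDdef]; linarith
  set t : ℝ := max (b + 1) ((b * G T₀ - T₀ * G b) / D + 1) with htdef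
  have htb : b + 1 ≤ t := le_max_left _ _
  have ht2 : (b * G T₀ - T₀ * G b) / D + 1 ≤ t := le_max_right _ _
  have htD : b * G T₀ - T₀ * G b + D ≤ t * D := by
    have : (b * G T₀ - T₀ * G b) / D ≤ t - 1 := by linarith
    have := (div_le_iff₀ hD).mp this
    nlinarith
  have htT : T₀ < t := by linarith
  have htT' : (0:ℝ) < t - T₀ := by linarith
  set μ : ℝ := (t - b) / (t - T₀) with hμdef
  set ν : ℝ := (b - T₀) / (t - T₀) with hνdef
  have hμ : 0 ≤ μ := div_nonneg (by linarith) htT'.le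
  have hν : 0 ≤ ν := div_nonneg (by linarith) htT'.le
  have hsum : μ + ν = 1 := by
    rw [hμdef, hνdef, ← add_div, div_eq_one_iff_eq (ne_of_gt htT')]
    ring
  have hcomb : μ • T₀ + ν • t = b := by
    rw [hμdef, hνdef, smul_eq_mul, smul_eq_mul]
    field_simp
    ring
  have hconc := hG.2 (Set.self_mem_Ici) (Set.mem_Ici.mpr htT.le) hμ hν hsum
  rw [hcomb] at hconc
  simp only [smul_eq_mul] at hconc
  -- hconc : μ * G T₀ + ν * G t ≤ G b
  have hGt : 0 < G t := hGpos t htT.le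
  have hνpos : 0 < ν := div_pos (by linarith) htT'
  have h1 : μ * G T₀ < G b := by nlinarith
  have h2 : (t - b) * G T₀ < (t - T₀) * G b := by
    have h3 : (t - b) / (t - T₀) * G T₀ < G b := h1
    rw [div_mul_eq_mul_div, div_lt_iff₀ htT'] at h3
    linarith
  nlinarith [htD, h2]
end
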